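/- Let N = (κ, ν) be a mixed binomial process with counting variable K satisfying E[K] = Var(K) (orthogonality). Then for disjoint f, g ∈ ℰ₊ (i.e., f·g = 0 pointwise) with finite second moments under ν, Var(Nf + Ng) = Var(Nf) + Var(Ng). -/

import Mathlib

open MeasureTheory ProbabilityTheory ENNReal Finset

lemma aux_tsum_indicator (n : ℕ) :
    ∑' i : ℕ, (if i < n then (1:ℝ≥0∞) else 0) = n := by
  have h0 : ∀ i ∉ Finset.range n, (if i < n then (1:ℝ≥0∞) else 0) = 0 := by
    intro i hi
    simp only [Finset.mem_range, not_lt] at hi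
    simp [Nat.not_lt.mpr hi]
  have h1 : ∑ i ∈ Finset.range n, (if i < n then (1:ℝ≥0∞) else 0)
      = ∑ _i ∈ Finset.range n, (1:ℝ≥0∞) :=
    Finset.sum_congr rfl (fun i hi => by simp [Finset.mem_range.mp hi])
  rw [tsum_eq_sum h0, h1]
  simp

lemma aux_nat_pair_count (n : ℕ) :
    ∑ p ∈ Finset.range n ×ˢ Finset.range n, (if p.1 = p.2 then 0 else 1 : ℕ) = n * (n-1) := by
  rw [Finset.sum_product]
  have h1 : ∀ i ∈ Finset.range n, ∑ j ∈ Finset.range n, (if i = j then 0 else 1 : ℕ) = n - 1 := by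
    intro i hi
    have hterm : ∀ j : ℕ, (if i = j then (0:ℕ) else 1) + (if i = j then 1 else 0) = 1 := by
      intro j; by_cases h : i = j <;> simp [h]
    have h2 : ∑ j ∈ Finset.range n, ((if i = j then (0:ℕ) else 1) + (if i = j then 1 else 0)) = n := by
      simp only [hterm]; simp
    rw [Finset.sum_add_distrib, Finset.sum_ite_eq (Finset.range n) i (fun _ => 1)] at h2
    rw [if_pos hi] at h2
    omega
  rw [Finset.sum_congr rfl h1]
  simp [Finset.sum_const, Finset.card_range]

lemma aux_tsum_pair_count (n : ℕ) :
    ∑' p : ℕ × ℕ, (if p.1 = p.2 then 0 else if p.1 < n ∧ p.2 < n then (1:ℝ≥0∞) else 0)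
      = ((n * (n-1) : ℕ) : ℝ≥0∞) := by
  have h0 : ∀ p ∉ Finset.range n ×ˢ Finset.range n,
      (if p.1 = p.2 then 0 else if p.1 < n ∧ p.2 < n then (1:ℝ≥0∞) else 0) = 0 := by
    intro p hp
    simp only [Finset.mem_product, Finset.mem_range, not_and_or, not_lt] at hp
    have h : ¬ (p.1 < n ∧ p.2 < n) := by omega
    by_cases hd : p.1 = p.2 <;> simp [hd, h]
  rw [tsum_eq_sum h0, ← aux_nat_pair_count n, Nat.cast_sum]
  refine Finset.sum_congr rfl ?_
  intro p hp
  simp only [Finset.mem_product, Finset.mem_range] at hp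
  by_cases h : p.1 = p.2 <;> simp [h, hp.1, hp.2]

section
variable {Ω : Type*} [MeasureSpace Ω] [IsProbabilityMeasure (ℙ : Measure Ω)]
  {E : Type*} [MeasurableSpace E] (ν : Measure E) [IsProbabilityMeasure ν]
  (K : Ω → ℕ) (X : ℕ → Ω → E)

lemma aux_mean (hK : Measurable K) (hX : ∀ i, Measurable (X i))
    (hlaw : ∀ i, Measure.map (X i) ℙ = ν)
    (hKX : IndepFun K (fun ω i => X i ω) ℙ)
    (u : E → ℝ≥0∞) (hu : Measurable u) :
    ∫⁻ ω, ∑ i ∈ Finset.range (K ω), u (X i ω) ∂ℙ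
      = (∫⁻ x, u x ∂ν) * ∫⁻ ω, (K ω : ℝ≥0∞) ∂ℙ := by
  have hQmeas : ∀ i : ℕ, Measurable fun ω => (if i < K ω then (1:ℝ≥0∞) else 0) :=
    fun i => (measurable_from_nat (f := fun n => if i < n then (1:ℝ≥0∞) else 0)).comp hK
  have hpw : ∀ ω, ∑ i ∈ Finset.range (K ω), u (X i ω)
      = ∑' i : ℕ, (if i < K ω then (1:ℝ≥0∞) else 0) * u (X i ω) := by
    intro ω
    have h0 : ∀ i ∉ Finset.range (K ω),
        (if i < K ω then (1:ℝ≥0∞) else 0) * u (X i ω) = 0 := by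
      intro i hi
      simp only [Finset.mem_range, not_lt] at hi
      simp [Nat.not_lt.mpr hi]
    rw [tsum_eq_sum h0]
    exact Finset.sum_congr rfl (fun i hi => by simp [Finset.mem_range.mp hi])
  rw [lintegral_congr hpw]
  have hTmeas : ∀ i : ℕ, Measurable fun ω => (if i < K ω then (1:ℝ≥0∞) else 0) * u (X i ω) :=
    fun i => (hQmeas i).mul (hu.comp (hX i))
  rw [lintegral_tsum (fun i => (hTmeas i).aemeasurable)]
  have hterm : ∀ i : ℕ, ∫⁻ ω, (if i < K ω then (1:ℝ≥0∞) else 0) * u (X i ω) ∂ℙ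
      = (∫⁻ ω, (if i < K ω then (1:ℝ≥0∞) else 0) ∂ℙ) * ∫⁻ x, u x ∂ν := by
    intro i
    have hind : IndepFun (fun ω => if i < K ω then (1:ℝ≥0∞) else 0)
        (fun ω => u (X i ω)) ℙ :=
      hKX.comp (φ := fun n => if i < n then (1:ℝ≥0∞) else 0)
        (ψ := fun x : ℕ → E => u (x i)) measurable_from_nat (hu.comp (measurable_pi_apply i))
    rw [show (∫⁻ ω, (if i < K ω then (1:ℝ≥0∞) else 0) * u (X i ω) ∂ℙ)
        = (∫⁻ ω, (if i < K ω then (1:ℝ≥0∞) else 0) ∂ℙ) * ∫⁻ ω, u (X i ω) ∂ℙ from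
      lintegral_mul_eq_lintegral_mul_lintegral_of_indepFun'' (hQmeas i).aemeasurable
        (hu.comp (hX i)).aemeasurable hind]
    congr 1
    rw [← hlaw i, lintegral_map hu (hX i)]
  simp only [hterm]
  rw [ENNReal.tsum_mul_right, mul_comm]
  congr 1
  rw [← lintegral_tsum (fun i => (hQmeas i).aemeasurable)]
  exact lintegral_congr (fun ω => aux_tsum_indicator (K ω))


set_option maxHeartbeats 1000000 in
lemma aux_core (hK : Measurable K) (hX : ∀ i, Measurable (X i))
    (hlaw : ∀ i, Measure.map (X i) ℙ = ν)
    (hiid : iIndepFun X ℙ)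
    (hKX : IndepFun K (fun ω i => X i ω) ℙ)
    (u v : E → ℝ≥0∞) (hu : Measurable u) (hv : Measurable v) :
    ∫⁻ ω, (∑ i ∈ Finset.range (K ω), u (X i ω)) * (∑ j ∈ Finset.range (K ω), v (X j ω)) ∂ℙ
      = (∫⁻ x, u x ∂ν) * (∫⁻ x, v x ∂ν) * (∫⁻ ω, ((K ω * (K ω - 1) : ℕ) : ℝ≥0∞) ∂ℙ)
        + (∫⁻ x, u x * v x ∂ν) * ∫⁻ ω, (K ω : ℝ≥0∞) ∂ℙ := by
  have hQmeas : ∀ p : ℕ × ℕ,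
      Measurable fun ω => (if p.1 < K ω ∧ p.2 < K ω then (1:ℝ≥0∞) else 0) :=
    fun p => (measurable_from_nat (f := fun n => if p.1 < n ∧ p.2 < n then (1:ℝ≥0∞) else 0)).comp hK
  have hTmeas : ∀ p : ℕ × ℕ, Measurable fun ω =>
      (if p.1 < K ω ∧ p.2 < K ω then (1:ℝ≥0∞) else 0) * (u (X p.1 ω) * v (X p.2 ω)) :=
    fun p => (hQmeas p).mul ((hu.comp (hX p.1)).mul (hv.comp (hX p.2)))
  -- pointwise expansion
  have hpw : ∀ ω, (∑ i ∈ Finset.range (K ω), u (X i ω)) * (∑ j ∈ Finset.range (K ω), v (X j ω))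
      = ∑' p : ℕ × ℕ,
          (if p.1 < K ω ∧ p.2 < K ω then (1:ℝ≥0∞) else 0) * (u (X p.1 ω) * v (X p.2 ω)) := by
    intro ω
    have h0 : ∀ p ∉ Finset.range (K ω) ×ˢ Finset.range (K ω),
        (if p.1 < K ω ∧ p.2 < K ω then (1:ℝ≥0∞) else 0) * (u (X p.1 ω) * v (X p.2 ω)) = 0 := by
      intro p hp
      simp only [Finset.mem_product, Finset.mem_range, not_and_or, not_lt] at hp
      have h : ¬ (p.1 < K ω ∧ p.2 < K ω) := by omega
      simp [h]
    rw [tsum_eq_sum h0, Finset.sum_mul_sum, Finset.sum_product]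
    refine Finset.sum_congr rfl (fun i hi => Finset.sum_congr rfl (fun j hj => ?_))
    simp [Finset.mem_range.mp hi, Finset.mem_range.mp hj]
  rw [lintegral_congr hpw, lintegral_tsum (fun p => (hTmeas p).aemeasurable)]
  -- per-term evaluation
  have hterm : ∀ p : ℕ × ℕ,
      ∫⁻ ω, (if p.1 < K ω ∧ p.2 < K ω then (1:ℝ≥0∞) else 0) * (u (X p.1 ω) * v (X p.2 ω)) ∂ℙ
      = (if p.1 = p.2 then (∫⁻ x, u x * v x ∂ν) * ∫⁻ ω, (if p.1 < K ω then (1:ℝ≥0∞) else 0) ∂ℙ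
         else 0)
        + (if p.1 = p.2 then 0 else
            (∫⁻ x, u x ∂ν) * (∫⁻ x, v x ∂ν)
              * ∫⁻ ω, (if p.1 < K ω ∧ p.2 < K ω then (1:ℝ≥0∞) else 0) ∂ℙ) := by
    intro p
    have hXvec : Measurable fun ω => (fun i => X i ω) := measurable_pi_lambda _ hX
    have hψmeas : Measurable fun x : ℕ → E => u (x p.1) * v (x p.2) :=
      (hu.comp (measurable_pi_apply p.1)).mul (hv.comp (measurable_pi_apply p.2))
    have hind : IndepFun (fun ω => if p.1 < K ω ∧ p.2 < K ω then (1:ℝ≥0∞) else 0)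
        (fun ω => u (X p.1 ω) * v (X p.2 ω)) ℙ :=
      hKX.comp (φ := fun n => if p.1 < n ∧ p.2 < n then (1:ℝ≥0∞) else 0)
        (ψ := fun x : ℕ → E => u (x p.1) * v (x p.2)) measurable_from_nat hψmeas
    have hsplit : ∫⁻ ω, (if p.1 < K ω ∧ p.2 < K ω then (1:ℝ≥0∞) else 0)
          * (u (X p.1 ω) * v (X p.2 ω)) ∂ℙ
        = (∫⁻ ω, (if p.1 < K ω ∧ p.2 < K ω then (1:ℝ≥0∞) else 0) ∂ℙ)
          * ∫⁻ ω, u (X p.1 ω) * v (X p.2 ω) ∂ℙ :=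
      lintegral_mul_eq_lintegral_mul_lintegral_of_indepFun'' (hQmeas p).aemeasurable
        ((hu.comp (hX p.1)).mul (hv.comp (hX p.2))).aemeasurable hind
    by_cases hd : p.1 = p.2
    · -- diagonal
      have h2 : ∫⁻ ω, u (X p.1 ω) * v (X p.2 ω) ∂ℙ = ∫⁻ x, u x * v x ∂ν := by
        rw [show (fun ω => u (X p.1 ω) * v (X p.2 ω))
            = fun ω => (fun x => u x * v x) (X p.1 ω) by rw [hd]]
        rw [← hlaw p.1, lintegral_map (f := fun x => u x * v x) (hu.mul hv) (hX p.1)]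
      have h3 : (fun ω => if p.1 < K ω ∧ p.2 < K ω then (1:ℝ≥0∞) else 0)
          = fun ω => if p.1 < K ω then (1:ℝ≥0∞) else 0 := by
        funext ω; rw [← hd]; simp
      rw [hsplit, h2, h3]
      simp [hd, mul_comm]
    · -- off-diagonal
      have hij : IndepFun (fun ω => u (X p.1 ω)) (fun ω => v (X p.2 ω)) ℙ :=
        (hiid.indepFun hd).comp hu hv
      have h2 : ∫⁻ ω, u (X p.1 ω) * v (X p.2 ω) ∂ℙ
          = (∫⁻ x, u x ∂ν) * ∫⁻ x, v x ∂ν := by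
        rw [show (∫⁻ ω, u (X p.1 ω) * v (X p.2 ω) ∂ℙ)
            = (∫⁻ ω, u (X p.1 ω) ∂ℙ) * ∫⁻ ω, v (X p.2 ω) ∂ℙ from
          lintegral_mul_eq_lintegral_mul_lintegral_of_indepFun''
            (hu.comp (hX p.1)).aemeasurable (hv.comp (hX p.2)).aemeasurable hij]
        have e1 : ∫⁻ ω, u (X p.1 ω) ∂ℙ = ∫⁻ x, u x ∂ν := by
          rw [← hlaw p.1, lintegral_map hu (hX p.1)]
        have e2 : ∫⁻ ω, v (X p.2 ω) ∂ℙ = ∫⁻ x, v x ∂ν := by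
          rw [← hlaw p.2, lintegral_map hv (hX p.2)]
        rw [e1, e2]
      rw [hsplit, h2]
      simp only [if_neg hd]
      ring
  simp only [hterm]
  rw [ENNReal.tsum_add, add_comm]
  congr 1
  · -- off-diagonal part
    have hre : ∀ p : ℕ × ℕ, (if p.1 = p.2 then 0 else
        (∫⁻ x, u x ∂ν) * (∫⁻ x, v x ∂ν)
          * ∫⁻ ω, (if p.1 < K ω ∧ p.2 < K ω then (1:ℝ≥0∞) else 0) ∂ℙ)
        = (∫⁻ x, u x ∂ν) * (∫⁻ x, v x ∂ν)
          * ∫⁻ ω, (if p.1 = p.2 then 0 else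
              if p.1 < K ω ∧ p.2 < K ω then (1:ℝ≥0∞) else 0) ∂ℙ := by
      intro p
      by_cases hd : p.1 = p.2 <;> simp [hd]
    simp only [hre]
    rw [ENNReal.tsum_mul_left]
    congr 1
    have hmeas2 : ∀ p : ℕ × ℕ, Measurable fun ω =>
        (if p.1 = p.2 then 0 else if p.1 < K ω ∧ p.2 < K ω then (1:ℝ≥0∞) else 0) :=
      fun p => (measurable_from_nat
        (f := fun n => if p.1 = p.2 then 0 else if p.1 < n ∧ p.2 < n then (1:ℝ≥0∞) else 0)).comp hK
    rw [← lintegral_tsum (fun p => (hmeas2 p).aemeasurable)]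
    exact lintegral_congr (fun ω => aux_tsum_pair_count (K ω))
  · -- diagonal part
    rw [ENNReal.tsum_prod']
    have hcollapse : ∀ i : ℕ, (∑' j : ℕ, (if i = j then
        (∫⁻ x, u x * v x ∂ν) * ∫⁻ ω, (if i < K ω then (1:ℝ≥0∞) else 0) ∂ℙ else 0))
        = (∫⁻ x, u x * v x ∂ν) * ∫⁻ ω, (if i < K ω then (1:ℝ≥0∞) else 0) ∂ℙ := by
      intro i
      rw [tsum_eq_single i (fun j hj => by simp [Ne.symm hj])]
      simp
    simp only [hcollapse]
    rw [ENNReal.tsum_mul_left]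
    congr 1
    have hQ1meas : ∀ i : ℕ, Measurable fun ω => (if i < K ω then (1:ℝ≥0∞) else 0) :=
      fun i => (measurable_from_nat (f := fun n => if i < n then (1:ℝ≥0∞) else 0)).comp hK
    rw [← lintegral_tsum (fun i => (hQ1meas i).aemeasurable)]
    exact lintegral_congr (fun ω => aux_tsum_indicator (K ω))

end


theorem stmt3
    {Ω : Type*} [MeasureSpace Ω] [IsProbabilityMeasure (ℙ : Measure Ω)]
    {E : Type*} [MeasurableSpace E]
    (ν : Measure E) [IsProbabilityMeasure ν]
    (K : Ω → ℕ) (X : ℕ → Ω → E)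
    (hK : Measurable K)
    (hX : ∀ i, Measurable (X i))
    (hlaw : ∀ i, Measure.map (X i) ℙ = ν)
    (hiid : iIndepFun X ℙ)
    (hKX : IndepFun K (fun ω i => X i ω) ℙ)
    (hK2 : Integrable (fun ω => ((K ω : ℝ))^2) ℙ)
    (horth : ∫ ω, (K ω : ℝ) ∂ℙ = variance (fun ω => (K ω : ℝ)) ℙ)
    (f g : E → ℝ) (hf : Measurable f) (hg : Measurable g)
    (hf0 : ∀ x, 0 ≤ f x) (hg0 : ∀ x, 0 ≤ g x)
    (hdisj : ∀ x, f x * g x = 0)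
    (hf2 : Integrable (fun x => (f x)^2) ν)
    (hg2 : Integrable (fun x => (g x)^2) ν) :
    variance (fun ω => (∑ i ∈ Finset.range (K ω), f (X i ω))
        + ∑ i ∈ Finset.range (K ω), g (X i ω)) ℙ
      = variance (fun ω => ∑ i ∈ Finset.range (K ω), f (X i ω)) ℙ
        + variance (fun ω => ∑ i ∈ Finset.range (K ω), g (X i ω)) ℙ := by
  set A : Ω → ℝ := fun ω => ∑ i ∈ Finset.range (K ω), f (X i ω) with hAdef
  set B : Ω → ℝ := fun ω => ∑ i ∈ Finset.range (K ω), g (X i ω) with hBdef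
  -- measurability
  have hAmeas : Measurable A := by
    have h1 : Measurable fun q : Ω × ℕ => ∑ i ∈ Finset.range q.2, f (X i q.1) :=
      measurable_from_prod_countable_left fun n =>
        Finset.measurable_sum (Finset.range n) (fun i _ => hf.comp (hX i))
    exact h1.comp (measurable_id.prodMk hK)
  have hBmeas : Measurable B := by
    have h1 : Measurable fun q : Ω × ℕ => ∑ i ∈ Finset.range q.2, g (X i q.1) :=
      measurable_from_prod_countable_left fun n =>
        Finset.measurable_sum (Finset.range n) (fun i _ => hg.comp (hX i))
    exact h1.comp (measurable_id.prodMk hK)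
  have hA0 : ∀ ω, 0 ≤ A ω := fun ω => Finset.sum_nonneg (fun i _ => hf0 _)
  have hB0 : ∀ ω, 0 ≤ B ω := fun ω => Finset.sum_nonneg (fun i _ => hg0 _)
  -- ennreal-valued functions
  set uf : E → ℝ≥0∞ := fun x => ENNReal.ofReal (f x) with hufdef
  set ug : E → ℝ≥0∞ := fun x => ENNReal.ofReal (g x) with hugdef
  have hufm : Measurable uf := ENNReal.measurable_ofReal.comp hf
  have hugm : Measurable ug := ENNReal.measurable_ofReal.comp hg
  set F : ℝ≥0∞ := ∫⁻ x, uf x ∂ν with hFdef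
  set G : ℝ≥0∞ := ∫⁻ x, ug x ∂ν with hGdef
  set L : ℝ≥0∞ := ∫⁻ ω, (K ω : ℝ≥0∞) ∂ℙ with hLdef
  set M : ℝ≥0∞ := ∫⁻ ω, ((K ω * (K ω - 1) : ℕ) : ℝ≥0∞) ∂ℙ with hMdef
  -- off-diagonal measure `W = 0` for the pair (f,g)
  have hW : ∫⁻ x, uf x * ug x ∂ν = 0 := by
    have : ∀ x, uf x * ug x = 0 := by
      intro x
      rw [hufdef, hugdef]
      simp only [← ENNReal.ofReal_mul (hf0 x), hdisj x, ENNReal.ofReal_zero]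
    rw [lintegral_congr this, lintegral_zero]
  -- second moments under ν
  have hFF : ∫⁻ x, uf x * uf x ∂ν = ∫⁻ x, ENNReal.ofReal ((f x)^2) ∂ν := by
    refine lintegral_congr fun x => ?_
    rw [hufdef]; simp only [← ENNReal.ofReal_mul (hf0 x), sq]
  have hGG : ∫⁻ x, ug x * ug x ∂ν = ∫⁻ x, ENNReal.ofReal ((g x)^2) ∂ν := by
    refine lintegral_congr fun x => ?_
    rw [hugdef]; simp only [← ENNReal.ofReal_mul (hg0 x), sq]
  have hF2lt : ∫⁻ x, ENNReal.ofReal ((f x)^2) ∂ν < ⊤ :=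
    (hasFiniteIntegral_iff_ofReal (ae_of_all _ fun x => sq_nonneg _)).1 hf2.hasFiniteIntegral
  have hG2lt : ∫⁻ x, ENNReal.ofReal ((g x)^2) ∂ν < ⊤ :=
    (hasFiniteIntegral_iff_ofReal (ae_of_all _ fun x => sq_nonneg _)).1 hg2.hasFiniteIntegral
  have hK2lt : ∫⁻ ω, ENNReal.ofReal ((K ω : ℝ)^2) ∂ℙ < ⊤ :=
    (hasFiniteIntegral_iff_ofReal (ae_of_all _ fun ω => sq_nonneg _)).1 hK2.hasFiniteIntegral
  -- first moments are finite
  have hfin1 : ∀ (h : E → ℝ), Measurable h → (∀ x, 0 ≤ h x) →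
      (∫⁻ x, ENNReal.ofReal ((h x)^2) ∂ν < ⊤) → ∫⁻ x, ENNReal.ofReal (h x) ∂ν < ⊤ := by
    intro h hm h0 h2
    have hb : ∀ x, ENNReal.ofReal (h x) ≤ 1 + ENNReal.ofReal ((h x)^2) := by
      intro x
      calc ENNReal.ofReal (h x) ≤ ENNReal.ofReal (1 + (h x)^2) :=
            ENNReal.ofReal_le_ofReal (by nlinarith [h0 x])
        _ = ENNReal.ofReal 1 + ENNReal.ofReal ((h x)^2) :=
            ENNReal.ofReal_add zero_le_one (sq_nonneg _)
        _ = 1 + ENNReal.ofReal ((h x)^2) := by rw [ENNReal.ofReal_one]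
    calc ∫⁻ x, ENNReal.ofReal (h x) ∂ν ≤ ∫⁻ x, (1 + ENNReal.ofReal ((h x)^2)) ∂ν :=
          lintegral_mono hb
      _ = 1 + ∫⁻ x, ENNReal.ofReal ((h x)^2) ∂ν := by
          rw [lintegral_add_left measurable_const, lintegral_one, measure_univ]
      _ < ⊤ := ENNReal.add_lt_top.2 ⟨ENNReal.one_lt_top, h2⟩
  have hFlt : F < ⊤ := hfin1 f hf hf0 hF2lt
  have hGlt : G < ⊤ := hfin1 g hg hg0 hG2lt
  have hLlt : L < ⊤ := by
    have hb : ∀ ω, (K ω : ℝ≥0∞) ≤ 1 + ENNReal.ofReal ((K ω : ℝ)^2) := by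
      intro ω
      rw [← ENNReal.ofReal_natCast (K ω)]
      calc ENNReal.ofReal (K ω : ℝ) ≤ ENNReal.ofReal (1 + (K ω : ℝ)^2) :=
            ENNReal.ofReal_le_ofReal (by nlinarith [Nat.cast_nonneg (α := ℝ) (K ω)])
        _ = 1 + ENNReal.ofReal ((K ω : ℝ)^2) := by
            rw [ENNReal.ofReal_add zero_le_one (sq_nonneg _), ENNReal.ofReal_one]
    calc L ≤ ∫⁻ ω, (1 + ENNReal.ofReal ((K ω : ℝ)^2)) ∂ℙ := lintegral_mono hb
      _ = 1 + ∫⁻ ω, ENNReal.ofReal ((K ω : ℝ)^2) ∂ℙ := by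
          rw [lintegral_add_left measurable_const, lintegral_one, measure_univ]
      _ < ⊤ := ENNReal.add_lt_top.2 ⟨ENNReal.one_lt_top, hK2lt⟩
  have hMlt : M < ⊤ := by
    have hb : ∀ ω, ((K ω * (K ω - 1) : ℕ) : ℝ≥0∞) ≤ ENNReal.ofReal ((K ω : ℝ)^2) := by
      intro ω
      have h1 : (K ω * (K ω - 1) : ℕ) ≤ K ω * K ω := Nat.mul_le_mul_left _ (Nat.sub_le _ _)
      calc ((K ω * (K ω - 1) : ℕ) : ℝ≥0∞) ≤ ((K ω * K ω : ℕ) : ℝ≥0∞) := Nat.cast_le.2 h1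
        _ = ENNReal.ofReal ((K ω : ℝ)^2) := by
            rw [← ENNReal.ofReal_natCast]; congr 1; push_cast; ring
    calc M ≤ ∫⁻ ω, ENNReal.ofReal ((K ω : ℝ)^2) ∂ℙ := lintegral_mono hb
      _ < ⊤ := hK2lt
  -- lintegral formulas
  have hAof : ∀ ω, ENNReal.ofReal (A ω) = ∑ i ∈ Finset.range (K ω), uf (X i ω) := by
    intro ω
    rw [hAdef, hufdef]
    exact ENNReal.ofReal_sum_of_nonneg (fun i _ => hf0 _)
  have hBof : ∀ ω, ENNReal.ofReal (B ω) = ∑ i ∈ Finset.range (K ω), ug (X i ω) := by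
    intro ω
    rw [hBdef, hugdef]
    exact ENNReal.ofReal_sum_of_nonneg (fun i _ => hg0 _)
  have eA : ∫⁻ ω, ENNReal.ofReal (A ω) ∂ℙ = F * L := by
    rw [lintegral_congr hAof]; exact aux_mean ν K X hK hX hlaw hKX uf hufm
  have eB : ∫⁻ ω, ENNReal.ofReal (B ω) ∂ℙ = G * L := by
    rw [lintegral_congr hBof]; exact aux_mean ν K X hK hX hlaw hKX ug hugm
  have eAB : ∫⁻ ω, ENNReal.ofReal (A ω * B ω) ∂ℙ = F * G * M := by
    have hpw : ∀ ω, ENNReal.ofReal (A ω * B ω)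
        = (∑ i ∈ Finset.range (K ω), uf (X i ω)) * ∑ j ∈ Finset.range (K ω), ug (X j ω) := by
      intro ω
      rw [ENNReal.ofReal_mul (hA0 ω), hAof ω, hBof ω]
    rw [lintegral_congr hpw, aux_core ν K X hK hX hlaw hiid hKX uf ug hufm hugm, hW,
      zero_mul, add_zero]
  have eA2 : ∫⁻ ω, ENNReal.ofReal ((A ω)^2) ∂ℙ
      = F * F * M + (∫⁻ x, ENNReal.ofReal ((f x)^2) ∂ν) * L := by
    have hpw : ∀ ω, ENNReal.ofReal ((A ω)^2)
        = (∑ i ∈ Finset.range (K ω), uf (X i ω)) * ∑ j ∈ Finset.range (K ω), uf (X j ω) := by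
      intro ω
      rw [sq, ENNReal.ofReal_mul (hA0 ω), hAof ω]
    rw [lintegral_congr hpw, aux_core ν K X hK hX hlaw hiid hKX uf uf hufm hufm, hFF]
  have eB2 : ∫⁻ ω, ENNReal.ofReal ((B ω)^2) ∂ℙ
      = G * G * M + (∫⁻ x, ENNReal.ofReal ((g x)^2) ∂ν) * L := by
    have hpw : ∀ ω, ENNReal.ofReal ((B ω)^2)
        = (∑ i ∈ Finset.range (K ω), ug (X i ω)) * ∑ j ∈ Finset.range (K ω), ug (X j ω) := by
      intro ω
      rw [sq, ENNReal.ofReal_mul (hB0 ω), hBof ω]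
    rw [lintegral_congr hpw, aux_core ν K X hK hX hlaw hiid hKX ug ug hugm hugm, hGG]
  -- integrability
  have hint : ∀ (h : Ω → ℝ), Measurable h → (∀ ω, 0 ≤ h ω) →
      (∫⁻ ω, ENNReal.ofReal (h ω) ∂ℙ < ⊤) → Integrable h ℙ := by
    intro h hm h0 hlt
    exact ⟨hm.aestronglyMeasurable,
      (hasFiniteIntegral_iff_ofReal (ae_of_all _ h0)).2 hlt⟩
  have intA2 : Integrable (fun ω => (A ω)^2) ℙ := by
    refine hint _ (hAmeas.pow_const 2) (fun ω => sq_nonneg _) ?_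
    rw [eA2]
    exact ENNReal.add_lt_top.2 ⟨ENNReal.mul_lt_top (ENNReal.mul_lt_top hFlt hFlt) hMlt,
      ENNReal.mul_lt_top hF2lt hLlt⟩
  have intB2 : Integrable (fun ω => (B ω)^2) ℙ := by
    refine hint _ (hBmeas.pow_const 2) (fun ω => sq_nonneg _) ?_
    rw [eB2]
    exact ENNReal.add_lt_top.2 ⟨ENNReal.mul_lt_top (ENNReal.mul_lt_top hGlt hGlt) hMlt,
      ENNReal.mul_lt_top hG2lt hLlt⟩
  have intAB : Integrable (fun ω => A ω * B ω) ℙ := by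
    refine hint _ (hAmeas.mul hBmeas) (fun ω => mul_nonneg (hA0 ω) (hB0 ω)) ?_
    rw [eAB]
    exact ENNReal.mul_lt_top (ENNReal.mul_lt_top hFlt hGlt) hMlt
  have memA : MemLp A 2 ℙ := (memLp_two_iff_integrable_sq hAmeas.aestronglyMeasurable).2 intA2
  have memB : MemLp B 2 ℙ := (memLp_two_iff_integrable_sq hBmeas.aestronglyMeasurable).2 intB2
  have intA : Integrable A ℙ := memA.integrable one_le_two
  have intB : Integrable B ℙ := memB.integrable one_le_two
  -- real-valued integral identities
  have hre : ∀ (h : Ω → ℝ), Measurable h → (∀ ω, 0 ≤ h ω) →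
      ∫ ω, h ω ∂ℙ = (∫⁻ ω, ENNReal.ofReal (h ω) ∂ℙ).toReal := by
    intro h hm h0
    exact integral_eq_lintegral_of_nonneg_ae (ae_of_all _ h0) hm.aestronglyMeasurable
  have hreν : ∀ (h : E → ℝ), Measurable h → (∀ x, 0 ≤ h x) →
      ∫ x, h x ∂ν = (∫⁻ x, ENNReal.ofReal (h x) ∂ν).toReal := by
    intro h hm h0
    exact integral_eq_lintegral_of_nonneg_ae (ae_of_all _ h0) hm.aestronglyMeasurable
  have rA : ∫ ω, A ω ∂ℙ = F.toReal * L.toReal := by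
    rw [hre A hAmeas hA0, eA, ENNReal.toReal_mul]
  have rB : ∫ ω, B ω ∂ℙ = G.toReal * L.toReal := by
    rw [hre B hBmeas hB0, eB, ENNReal.toReal_mul]
  have rAB : ∫ ω, A ω * B ω ∂ℙ = F.toReal * G.toReal * M.toReal := by
    rw [hre (fun ω => A ω * B ω) (hAmeas.mul hBmeas) (fun ω => mul_nonneg (hA0 ω) (hB0 ω)), eAB,
      ENNReal.toReal_mul, ENNReal.toReal_mul]
  -- identify L.toReal and M.toReal with real moments of K
  have hKcast : Measurable fun ω => (K ω : ℝ) := measurable_from_nat.comp hK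
  have rL : L.toReal = ∫ ω, (K ω : ℝ) ∂ℙ := by
    rw [hre _ hKcast (fun ω => Nat.cast_nonneg _)]
    congr 1
    exact lintegral_congr fun ω => (ENNReal.ofReal_natCast (K ω)).symm
  have hKKcast : Measurable fun ω => ((K ω * (K ω - 1) : ℕ) : ℝ) :=
    (measurable_from_nat (f := fun n => ((n * (n - 1) : ℕ) : ℝ))).comp hK
  have intK : Integrable (fun ω => (K ω : ℝ)) ℙ := by
    refine hint _ hKcast (fun ω => Nat.cast_nonneg _) ?_
    calc ∫⁻ ω, ENNReal.ofReal ((K ω : ℝ)) ∂ℙ = L :=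
          lintegral_congr fun ω => ENNReal.ofReal_natCast (K ω)
      _ < ⊤ := hLlt
  have hcast : ∀ ω, ((K ω * (K ω - 1) : ℕ) : ℝ) = (K ω : ℝ)^2 - (K ω : ℝ) := by
    intro ω
    have h1 : K ω * (K ω - 1) = K ω * K ω - K ω := by
      cases hk : K ω with
      | zero => rfl
      | succ n => rw [Nat.succ_sub_one, Nat.mul_succ, Nat.add_sub_cancel]
    have h2 : K ω ≤ K ω * K ω := by
      cases hk : K ω with
      | zero => simp
      | succ n => exact Nat.le_mul_of_pos_left _ (Nat.succ_pos n)
    rw [h1, Nat.cast_sub h2]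
    push_cast
    ring
  have rM : M.toReal = (∫ ω, (K ω : ℝ)^2 ∂ℙ) - ∫ ω, (K ω : ℝ) ∂ℙ := by
    have e1 : ∫ ω, ((K ω * (K ω - 1) : ℕ) : ℝ) ∂ℙ = M.toReal := by
      rw [hre _ hKKcast (fun ω => Nat.cast_nonneg _)]
      congr 1
      exact lintegral_congr fun ω => ENNReal.ofReal_natCast _
    rw [← e1, integral_congr_ae (ae_of_all _ hcast), integral_sub hK2 intK]
  -- orthogonality
  have memK2 : MemLp (fun ω => (K ω : ℝ)) 2 ℙ :=
    (memLp_two_iff_integrable_sq hKcast.aestronglyMeasurable).2 hK2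
  have hvarK : variance (fun ω => (K ω : ℝ)) ℙ
      = (∫ ω, (K ω : ℝ)^2 ∂ℙ) - (∫ ω, (K ω : ℝ) ∂ℙ)^2 := by
    rw [variance_eq_sub memK2]
    congr 1
  have rM2 : M.toReal = (∫ ω, (K ω : ℝ) ∂ℙ)^2 := by
    rw [rM]
    have := horth.trans hvarK
    linarith
  -- E[AB] = E[A] E[B]
  have rABeq : ∫ ω, A ω * B ω ∂ℙ = (∫ ω, A ω ∂ℙ) * ∫ ω, B ω ∂ℙ := by
    rw [rAB, rA, rB, rL, rM2]
    ring
  -- final assembly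
  have memAB : MemLp (fun ω => A ω + B ω) 2 ℙ := memA.add memB
  show variance (fun ω => A ω + B ω) ℙ = variance A ℙ + variance B ℙ
  rw [variance_eq_sub memAB, variance_eq_sub memA, variance_eq_sub memB]
  have hsq : ∫ ω, ((fun ω => A ω + B ω)^2) ω ∂ℙ
      = (∫ ω, (A ω)^2 ∂ℙ) + (2 * (∫ ω, A ω * B ω ∂ℙ) + ∫ ω, (B ω)^2 ∂ℙ) := by
    have e : ∀ ω, ((fun ω => A ω + B ω)^2) ω
        = (A ω)^2 + (2 * (A ω * B ω) + (B ω)^2) := by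
      intro ω; simp [Pi.pow_apply]; ring
    have intR : Integrable (fun ω => 2 * (A ω * B ω) + (B ω)^2) ℙ :=
      (intAB.const_mul 2).add intB2
    have intC : Integrable (fun ω => 2 * (A ω * B ω)) ℙ := intAB.const_mul 2
    rw [integral_congr_ae (ae_of_all _ e), integral_add intA2 intR,
      integral_add intC intB2, MeasureTheory.integral_const_mul]
  have hA2pi : ∫ ω, (A^2) ω ∂ℙ = ∫ ω, (A ω)^2 ∂ℙ :=
    integral_congr_ae (ae_of_all _ fun ω => by simp [Pi.pow_apply])
  have hB2pi : ∫ ω, (B^2) ω ∂ℙ = ∫ ω, (B ω)^2 ∂ℙ :=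
    integral_congr_ae (ae_of_all _ fun ω => by simp [Pi.pow_apply])
  have hsum : ∫ ω, (A ω + B ω) ∂ℙ = (∫ ω, A ω ∂ℙ) + ∫ ω, B ω ∂ℙ :=
    integral_add intA intB
  calc ∫ ω, ((fun ω => A ω + B ω)^2) ω ∂ℙ - (∫ ω, (A ω + B ω) ∂ℙ)^2
      = (∫ ω, (A ω)^2 ∂ℙ) + (2 * ((∫ ω, A ω ∂ℙ) * ∫ ω, B ω ∂ℙ) + ∫ ω, (B ω)^2 ∂ℙ)
        - ((∫ ω, A ω ∂ℙ) + ∫ ω, B ω ∂ℙ)^2 := by rw [hsq, rABeq, hsum]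
    _ = (∫ ω, (A^2) ω ∂ℙ - (∫ ω, A ω ∂ℙ)^2) + (∫ ω, (B^2) ω ∂ℙ - (∫ ω, B ω ∂ℙ)^2) := by
        rw [hA2pi, hB2pi]; ring
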